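/- arXiv:1412.7617 — 5 statements merged into one kernel-verified Lean document; each statement's English description precedes it below -/
import Mathlib

section
/- Let m_1,…,m_I and n_1,…,n_{I+1} be positive integers and set M := \sum_{i=1}^I m_i. Then \sum_{i=1}^{I} [m_i]·[1 + \sum_{j=1}^{i} n_j] · (\prod_{j=i+1}^{I} [1 + \sum_{k=1}^{j}(n_k + m_k)]) / (\prod_{j=i}^{I} [1 + n_j + \sum_{k=1}^{j-1}(n_k + m_k)]) = [M], where [n] denotes the quantum integer (q^n - q^{-n})/(q - q^{-1}). -/
open Finset

/-- The quantum integer `[n] = (q^n - q^(-n))/(q - q⁻¹)`. -/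
noncomputable def qint {K : Type*} [Field K] (q : K) (n : ℤ) : K :=
  (q ^ n - q ^ (-n)) / (q - q⁻¹)

lemma qsub_ne {K : Type*} [Field K] {q : K} (hq : q ≠ 0) (hq2 : q ^ 2 ≠ 1) :
    q - q⁻¹ ≠ 0 := by
  intro h
  apply hq2
  have hqq : q = q⁻¹ := sub_eq_zero.mp h
  calc q ^ 2 = q * q := sq q
    _ = q * q⁻¹ := by rw [← hqq]
    _ = 1 := mul_inv_cancel₀ hq

/-- Key quantum-integer identity: `[a+c][b] - [a][b+c] = [c][b-a]`. -/
lemma qint_key {K : Type*} [Field K] {q : K} (hq : q ≠ 0) (hq2 : q ^ 2 ≠ 1)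
    (a b c : ℤ) :
    qint q (a + c) * qint q b - qint q a * qint q (b + c)
      = qint q c * qint q (b - a) := by
  have hd := qsub_ne hq hq2
  have ha : q ^ a ≠ 0 := zpow_ne_zero _ hq
  have hb : q ^ b ≠ 0 := zpow_ne_zero _ hq
  have hc : q ^ c ≠ 0 := zpow_ne_zero _ hq
  simp only [qint, sub_eq_add_neg, neg_add, neg_neg, zpow_add₀ hq, zpow_neg]
  field_simp
  ring

lemma qint_comb {K : Type*} [Field K] {q : K} (hq : q ≠ 0) (hq2 : q ^ 2 ≠ 1)
    (A D C : ℤ) :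
    qint q A * qint q (D + C) + qint q C * qint q (D - A)
      = qint q (A + C) * qint q D := by
  linear_combination - qint_key hq hq2 A D C

/-- Lemma A.2 (lemma-app0): with `M = ∑ m_i`,
`∑_{i=1}^{I} [m_i]·[1+∑_{j≤i} n_j]·(∏_{j=i+1}^{I}[1+∑_{k≤j}(n_k+m_k)])
  /(∏_{j=i}^{I}[1+n_j+∑_{k<j}(n_k+m_k)]) = [M]`. -/
theorem sum_rule_app0 {K : Type*} [Field K] (q : K)
    (hq : q ≠ 0) (hq2 : q ^ 2 ≠ 1)
    (hpos : ∀ n : ℤ, 1 ≤ n → qint q n ≠ 0)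
    (I : ℕ) (m n : ℕ → ℕ)
    (hm : ∀ i ∈ Icc 1 I, 1 ≤ m i) (hn : ∀ i ∈ Icc 1 (I + 1), 1 ≤ n i) :
    ∑ i ∈ Icc 1 I,
      qint q (m i) * qint q (1 + ∑ j ∈ Icc 1 i, (n j : ℤ)) *
        (∏ j ∈ Icc (i + 1) I, qint q (1 + ∑ k ∈ Icc 1 j, ((n k : ℤ) + (m k : ℤ)))) /
        (∏ j ∈ Icc i I, qint q (1 + (n j : ℤ) + ∑ k ∈ Icc 1 (j - 1), ((n k : ℤ) + (m k : ℤ))))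
      = qint q (∑ i ∈ Icc 1 I, (m i : ℤ)) := by
  induction I with
  | zero => simp [qint]
  | succ I ih =>
    -- nonvanishing of the denominator factors
    have hSnn : ∀ J : ℕ, (0:ℤ) ≤ ∑ k ∈ Icc 1 J, ((n k : ℤ) + (m k : ℤ)) := by
      intro J
      apply Finset.sum_nonneg
      intro k _
      positivity
    have hd : ∀ j : ℕ,
        qint q (1 + (n j : ℤ) + ∑ k ∈ Icc 1 (j - 1), ((n k : ℤ) + (m k : ℤ))) ≠ 0 := by
      intro j
      apply hpos
      have h1 := hSnn (j - 1)
      have h2 : (0:ℤ) ≤ (n j : ℤ) := Int.natCast_nonneg _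
      linarith
    have hm' : ∀ i ∈ Icc 1 I, 1 ≤ m i := fun i hi => hm i (by simp at hi ⊢; omega)
    have hn' : ∀ i ∈ Icc 1 (I + 1), 1 ≤ n i := fun i hi => hn i (by simp at hi ⊢; omega)
    have ihI := ih hm' hn'
    -- split the outer sum
    rw [Finset.sum_Icc_succ_top (by omega : 1 ≤ I + 1)]
    -- top term simplification
    have htop : Icc (I + 1 + 1) (I + 1) = (∅ : Finset ℕ) := Icc_eq_empty (by omega)
    rw [htop, prod_empty, Icc_self, prod_singleton]
    -- rewrite each earlier term
    have hterm : ∀ i ∈ Icc 1 I,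
        qint q (m i) * qint q (1 + ∑ j ∈ Icc 1 i, (n j : ℤ)) *
          (∏ j ∈ Icc (i + 1) (I + 1), qint q (1 + ∑ k ∈ Icc 1 j, ((n k : ℤ) + (m k : ℤ)))) /
          (∏ j ∈ Icc i (I + 1), qint q (1 + (n j : ℤ) + ∑ k ∈ Icc 1 (j - 1), ((n k : ℤ) + (m k : ℤ))))
        = (qint q (m i) * qint q (1 + ∑ j ∈ Icc 1 i, (n j : ℤ)) *
            (∏ j ∈ Icc (i + 1) I, qint q (1 + ∑ k ∈ Icc 1 j, ((n k : ℤ) + (m k : ℤ)))) /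
            (∏ j ∈ Icc i I, qint q (1 + (n j : ℤ) + ∑ k ∈ Icc 1 (j - 1), ((n k : ℤ) + (m k : ℤ))))) *
          (qint q (1 + ∑ k ∈ Icc 1 (I + 1), ((n k : ℤ) + (m k : ℤ))) /
            qint q (1 + (n (I + 1) : ℤ) + ∑ k ∈ Icc 1 (I + 1 - 1), ((n k : ℤ) + (m k : ℤ)))) := by
      intro i hi
      simp only [mem_Icc] at hi
      rw [Finset.prod_Icc_succ_top (by omega : i + 1 ≤ I + 1),
          Finset.prod_Icc_succ_top (by omega : i ≤ I + 1)]
      ring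
    rw [Finset.sum_congr rfl hterm, ← Finset.sum_mul, ihI]
    -- now pure algebra
    have hsplitS : ∑ k ∈ Icc 1 (I + 1), ((n k : ℤ) + (m k : ℤ))
        = (∑ k ∈ Icc 1 I, (n k : ℤ)) + (∑ k ∈ Icc 1 I, (m k : ℤ)) + ((n (I+1) : ℤ) + (m (I+1) : ℤ)) := by
      rw [Finset.sum_Icc_succ_top (by omega : 1 ≤ I + 1), Finset.sum_add_distrib]
    have hsplitN : ∑ j ∈ Icc 1 (I + 1), (n j : ℤ)
        = (∑ j ∈ Icc 1 I, (n j : ℤ)) + (n (I+1) : ℤ) :=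
      Finset.sum_Icc_succ_top (by omega : 1 ≤ I + 1) _
    have hsplitM : ∑ j ∈ Icc 1 (I + 1), (m j : ℤ)
        = (∑ j ∈ Icc 1 I, (m j : ℤ)) + (m (I+1) : ℤ) :=
      Finset.sum_Icc_succ_top (by omega : 1 ≤ I + 1) _
    have hSNM : ∑ k ∈ Icc 1 (I + 1 - 1), ((n k : ℤ) + (m k : ℤ))
        = (∑ k ∈ Icc 1 I, (n k : ℤ)) + (∑ k ∈ Icc 1 I, (m k : ℤ)) := by
      simp only [Nat.add_sub_cancel]
      exact Finset.sum_add_distrib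
    set A : ℤ := ∑ j ∈ Icc 1 I, (n j : ℤ) with hA
    set B : ℤ := ∑ j ∈ Icc 1 I, (m j : ℤ) with hB
    rw [hsplitS, hsplitN, hsplitM, hSNM]
    have hdne := hd (I + 1)
    rw [hSNM] at hdne
    set D : ℤ := 1 + (n (I+1) : ℤ) + (A + B) with hD
    have e1 : (1:ℤ) + (A + B + ((n (I+1) : ℤ) + (m (I+1) : ℤ))) = D + (m (I+1) : ℤ) := by
      rw [hD]; ring
    have e2 : (1:ℤ) + (A + (n (I+1) : ℤ)) = D - B := by rw [hD]; ring
    have e3 : (1:ℤ) + (n (I+1) : ℤ) + (A + B) = D := by rw [hD]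
    rw [e1, e2, e3] at *
    have comb := qint_comb hq hq2 B D ((m (I+1) : ℤ))
    field_simp
    linear_combination comb
end

section
/- Let m_1,…,m_J and n_1,…,n_{J+1} be positive integers, set M := \sum_{i=1}^{J} m_i and N := \sum_{i=1}^{J+1} n_i. Then \sum_{i=1}^{J} [1 + \sum_{j=1}^{i} n_j]·[m_i] · (\prod_{j=i+2}^{J+1} [1 + \sum_{k=1}^{j-1}(n_k + m_k)]) / (\prod_{j=i}^{J+1} [1 + n_j + \sum_{k=1}^{j-1}(n_k + m_k)]) = [M] / [M + N + 1], where [n] is the quantum integer. -/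
open Finset

lemma qint_mul_key {K : Type*} [Field K] (q : K) (hq : q ≠ 0) (a b c : ℤ) :
    qint q a * qint q (b + c) = qint q b * qint q (a + c) + qint q c * qint q (a - b) := by
  unfold qint
  rw [div_mul_div_comm, div_mul_div_comm, div_mul_div_comm, ← add_div]
  congr 1
  simp only [neg_add, neg_sub, zpow_add₀ hq, zpow_sub₀ hq, zpow_neg]
  ring

/-- Lemma (lemma-app1): with `M = ∑_{i=1}^J m_i`, `N = ∑_{i=1}^{J+1} n_i`,
`∑_{i=1}^{J} [1+∑_{j≤i}n_j]·[m_i]·(∏_{j=i+2}^{J+1}[1+∑_{k<j}(n_k+m_k)])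
  /(∏_{j=i}^{J+1}[1+n_j+∑_{k<j}(n_k+m_k)]) = [M]/[M+N+1]`. -/
theorem sum_rule_app1 {K : Type*} [Field K] (q : K)
    (hq : q ≠ 0) (hq2 : q ^ 2 ≠ 1)
    (hpos : ∀ n : ℤ, 1 ≤ n → qint q n ≠ 0)
    (J : ℕ) (m n : ℕ → ℕ)
    (hm : ∀ i ∈ Icc 1 J, 1 ≤ m i) (hn : ∀ i ∈ Icc 1 (J + 1), 1 ≤ n i) :
    ∑ i ∈ Icc 1 J,
      qint q (1 + ∑ j ∈ Icc 1 i, (n j : ℤ)) * qint q (m i) *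
        (∏ j ∈ Icc (i + 2) (J + 1), qint q (1 + ∑ k ∈ Icc 1 (j - 1), ((n k : ℤ) + (m k : ℤ)))) /
        (∏ j ∈ Icc i (J + 1), qint q (1 + (n j : ℤ) + ∑ k ∈ Icc 1 (j - 1), ((n k : ℤ) + (m k : ℤ))))
      = qint q (∑ i ∈ Icc 1 J, (m i : ℤ)) /
          qint q ((∑ i ∈ Icc 1 J, (m i : ℤ)) + (∑ i ∈ Icc 1 (J + 1), (n i : ℤ)) + 1) := by
  revert hm hn
  induction J with
  | zero => intro hm hn; simp [qint]
  | succ J IH =>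
    intro hm hn
    have hIH := IH (fun i hi => hm i (by simp at hi ⊢; omega))
                   (fun i hi => hn i (by simp at hi ⊢; omega))
    -- abbreviations (as integers)
    set zM : ℤ := ∑ i ∈ Icc 1 J, (m i : ℤ) with hzM
    set zC : ℤ := 1 + ∑ j ∈ Icc 1 (J + 1), (n j : ℤ) with hzC
    set zm : ℤ := (m (J + 1) : ℤ) with hzm
    set zn2 : ℤ := (n (J + 2) : ℤ) with hzn2
    -- split the outer sum
    rw [Finset.sum_Icc_succ_top (by omega : 1 ≤ J + 1)]
    have key1 : ∀ i ∈ Icc 1 J,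
        qint q (1 + ∑ j ∈ Icc 1 i, (n j : ℤ)) * qint q (m i) *
          (∏ j ∈ Icc (i + 2) (J + 1 + 1), qint q (1 + ∑ k ∈ Icc 1 (j - 1), ((n k : ℤ) + (m k : ℤ)))) /
          (∏ j ∈ Icc i (J + 1 + 1), qint q (1 + (n j : ℤ) + ∑ k ∈ Icc 1 (j - 1), ((n k : ℤ) + (m k : ℤ))))
        = (qint q (1 + ∑ j ∈ Icc 1 i, (n j : ℤ)) * qint q (m i) *
            (∏ j ∈ Icc (i + 2) (J + 1), qint q (1 + ∑ k ∈ Icc 1 (j - 1), ((n k : ℤ) + (m k : ℤ)))) /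
            (∏ j ∈ Icc i (J + 1), qint q (1 + (n j : ℤ) + ∑ k ∈ Icc 1 (j - 1), ((n k : ℤ) + (m k : ℤ))))) *
          (qint q (1 + ∑ k ∈ Icc 1 (J + 1), ((n k : ℤ) + (m k : ℤ))) /
           qint q (1 + zn2 + ∑ k ∈ Icc 1 (J + 1), ((n k : ℤ) + (m k : ℤ)))) := by
      intro i hi
      simp only [mem_Icc] at hi
      rw [Finset.prod_Icc_succ_top (by omega : i + 2 ≤ J + 1 + 1),
          Finset.prod_Icc_succ_top (by omega : i ≤ J + 1 + 1)]
      norm_num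
      ring
    rw [Finset.sum_congr rfl key1, ← Finset.sum_mul, hIH]
    -- simplify the last term
    rw [show Icc (J + 1 + 2) (J + 1 + 1) = (∅ : Finset ℕ) from Finset.Icc_eq_empty (by omega),
        Finset.prod_empty,
        Finset.prod_Icc_succ_top (by omega : J + 1 ≤ J + 1 + 1)]
    rw [show Icc (J+1) (J+1) = {J+1} from Finset.Icc_self _, Finset.prod_singleton]
    norm_num
    -- integer bookkeeping
    have hsplit : ∀ t : ℕ, ∑ k ∈ Icc 1 t, ((n k : ℤ) + (m k : ℤ))
        = (∑ k ∈ Icc 1 t, (n k : ℤ)) + ∑ k ∈ Icc 1 t, (m k : ℤ) := fun t => Finset.sum_add_distrib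
    have hnsucc : ∑ j ∈ Icc 1 (J + 1), (n j : ℤ) = (∑ j ∈ Icc 1 J, (n j : ℤ)) + n (J + 1) :=
      Finset.sum_Icc_succ_top (by omega) _
    have hmsucc : ∑ j ∈ Icc 1 (J + 1), (m j : ℤ) = zM + zm :=
      Finset.sum_Icc_succ_top (by omega) _
    have hn2succ : ∑ j ∈ Icc 1 (J + 2), (n j : ℤ) = (∑ j ∈ Icc 1 (J+1), (n j : ℤ)) + zn2 :=
      Finset.sum_Icc_succ_top (by omega) _
    have eB1 : (1 : ℤ) + (n (J+1) : ℤ) + ∑ k ∈ Icc 1 J, ((n k : ℤ) + (m k : ℤ)) = zC + zM := by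
      rw [hsplit, hzC, hnsucc]; ring
    have eB1' : zM + (∑ i ∈ Icc 1 (J + 1), (n i : ℤ)) + 1 = zC + zM := by
      rw [hzC]; ring
    have eA : (1 : ℤ) + ∑ k ∈ Icc 1 (J + 1), ((n k : ℤ) + (m k : ℤ)) = zM + zm + zC := by
      rw [hsplit, hzC, hmsucc]; ring
    have eB2 : (1 : ℤ) + zn2 + ∑ k ∈ Icc 1 (J + 1), ((n k : ℤ) + (m k : ℤ))
        = zM + zm + zC + zn2 := by
      rw [hsplit, hzC, hmsucc]; ring
    have hn2succ' : ∑ j ∈ Icc 1 (J + 1 + 1), (n j : ℤ) = (∑ j ∈ Icc 1 (J+1), (n j : ℤ)) + zn2 :=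
      Finset.sum_Icc_succ_top (by omega) _
    have eRHS2 : zM + zm + (∑ i ∈ Icc 1 (J + 1 + 1), (n i : ℤ)) + 1 = zM + zm + zC + zn2 := by
      rw [hn2succ', hzC]; ring
    rw [eB1, eB1', eA, eB2, hmsucc, eRHS2]
    rw [show (1 + ∑ i ∈ Icc 1 (J + 1), (n i : ℤ)) = zC from hzC.symm]
    -- nonvanishing
    have hCpos : (1:ℤ) ≤ zC := by
      have : (0:ℤ) ≤ ∑ j ∈ Icc 1 (J + 1), (n j : ℤ) :=
        Finset.sum_nonneg fun j _ => Int.ofNat_nonneg _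
      omega
    have hMpos : (0:ℤ) ≤ zM := Finset.sum_nonneg fun j _ => Int.ofNat_nonneg _
    have hmpos : (0:ℤ) ≤ zm := Int.ofNat_nonneg _
    have hn2pos : (0:ℤ) ≤ zn2 := Int.ofNat_nonneg _
    have hB1 : qint q (zM + zC) ≠ 0 := hpos _ (by omega)
    rw [show zC + zM = zM + zC from add_comm _ _, ← hzm]
    have hB2 : qint q (zM + zm + zC + zn2) ≠ 0 := hpos _ (by omega)
    have key := qint_mul_key q hq (zM + zm) zM zC
    rw [show zM + zm - zM = zm by ring] at key
    field_simp
    linear_combination (-1 : K) * key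
end

section
/- Let n_1,…,n_I and m_1,…,m_I be positive integers, v_i := \sum_{j=1}^{i-1}(m_j + n_j). Then \sum_{i=1}^{I} q^{-\sum_{j=1}^{i-1} n_j - 1}·[m_i]/([1+v_i]·[1+v_{i+1}]) · \prod_{j=i+1}^{I} [1 + m_j + v_j]/[1 + v_{j+1}] = \prod_{j=1}^{I} [1 + m_j + v_j]/[1 + v_{j+1}] - q^{\sum_{i=1}^{I} m_i}/[1 + v_{I+1}], where [n] := (q^n - q^{-n})/(q - q^{-1}). -/
open Finset

section
variable {K : Type*} [Field K] {q : K}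

lemma hd_ne (hq : q ≠ 0) (hq2 : q ^ 2 ≠ 1) : q - q⁻¹ ≠ 0 := by
  intro h
  apply hq2
  have h' : q = q⁻¹ := sub_eq_zero.mp h
  field_simp at h'
  exact h'

lemma qint_one (hq : q ≠ 0) (hq2 : q ^ 2 ≠ 1) : qint q 1 = 1 := by
  unfold qint
  rw [zpow_one, zpow_neg, zpow_one]
  exact div_self (hd_ne hq hq2)

lemma qint_add (hq : q ≠ 0) (a b : ℤ) :
    qint q (a + b) = q ^ b * qint q a + q ^ (-a) * qint q b := by
  unfold qint
  rw [mul_div_assoc', mul_div_assoc', ← add_div]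
  congr 1
  rw [neg_add, zpow_add₀ hq, zpow_add₀ hq]
  ring

lemma tele (f : ℕ → K) (n : ℕ) : ∑ i ∈ Icc 1 n, (f i - f (i + 1)) = f 1 - f (n + 1) := by
  induction n with
  | zero => simp
  | succ k ih =>
      rw [Finset.sum_Icc_succ_top (by omega), ih]
      ring
end


/-- Lemma (lemma-app-eN2, Eqn. (app-9)): with `v_i = ∑_{j<i}(m_j+n_j)`,
`∑_{i=1}^I q^{-∑_{j<i}n_j - 1}[m_i]/([1+v_i][1+v_{i+1}]) ∏_{j=i+1}^I [1+m_j+v_j]/[1+v_{j+1}]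
  = ∏_{j=1}^I [1+m_j+v_j]/[1+v_{j+1}] - q^{∑ m_i}/[1+v_{I+1}]`. -/
theorem sum_rule_app9 {K : Type*} [Field K] (q : K)
    (hq : q ≠ 0) (hq2 : q ^ 2 ≠ 1)
    (hpos : ∀ n : ℤ, 1 ≤ n → qint q n ≠ 0)
    (I : ℕ) (m n : ℕ → ℕ)
    (hm : ∀ i ∈ Icc 1 I, 1 ≤ m i) (hn : ∀ i ∈ Icc 1 I, 1 ≤ n i)
    (v : ℕ → ℤ) (hv : ∀ i, v i = ∑ j ∈ Icc 1 (i - 1), ((m j : ℤ) + (n j : ℤ))) :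
    ∑ i ∈ Icc 1 I,
      q ^ (-(∑ j ∈ Icc 1 (i - 1), (n j : ℤ)) - 1) * qint q (m i) /
          (qint q (1 + v i) * qint q (1 + v (i + 1))) *
        ∏ j ∈ Icc (i + 1) I, qint q (1 + (m j : ℤ) + v j) / qint q (1 + v (j + 1))
      = (∏ j ∈ Icc 1 I, qint q (1 + (m j : ℤ) + v j) / qint q (1 + v (j + 1))) -
          q ^ (∑ i ∈ Icc 1 I, (m i : ℤ)) / qint q (1 + v (I + 1)) := by
  have hvnn : ∀ i, 0 ≤ v i := by
    intro i
    rw [hv]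
    exact Finset.sum_nonneg (fun j _ => by positivity)
  have hqv : ∀ i, qint q (1 + v i) ≠ 0 := fun i => hpos _ (by linarith [hvnn i])
  set R : ℕ → K := fun j => qint q (1 + (m j : ℤ) + v j) / qint q (1 + v (j + 1)) with hR
  set F : ℕ → K := fun i =>
    q ^ (∑ j ∈ Icc 1 (i - 1), (m j : ℤ)) / qint q (1 + v i) * ∏ j ∈ Icc i I, R j with hF
  have hterm : ∀ i ∈ Icc 1 I,
      q ^ (-(∑ j ∈ Icc 1 (i - 1), (n j : ℤ)) - 1) * qint q (m i) /
          (qint q (1 + v i) * qint q (1 + v (i + 1))) * ∏ j ∈ Icc (i + 1) I, R j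
        = F i - F (i + 1) := by
    intro i hi
    obtain ⟨hi1, hiI⟩ := mem_Icc.mp hi
    obtain ⟨k, rfl⟩ : ∃ k, i = k + 1 := ⟨i - 1, by omega⟩
    have hsplit : ∏ j ∈ Icc (k + 1) I, R j = R (k + 1) * ∏ j ∈ Icc (k + 2) I, R j := by
      rw [show Icc (k + 1) I = insert (k + 1) (Icc (k + 2) I) by
        ext x; simp only [mem_Icc, mem_insert]; omega]
      exact Finset.prod_insert (by simp)
    have hMk : (∑ j ∈ Icc 1 (k + 1), (m j : ℤ)) = (∑ j ∈ Icc 1 k, (m j : ℤ)) + m (k + 1) :=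
      Finset.sum_Icc_succ_top (by omega) _
    have hvk : v (k + 1) = (∑ j ∈ Icc 1 k, (m j : ℤ)) + (∑ j ∈ Icc 1 k, (n j : ℤ)) := by
      rw [hv]; simp [Finset.sum_add_distrib]
    simp only [hF, hR, Nat.add_sub_cancel, hsplit, hMk]
    set Mk := ∑ j ∈ Icc 1 k, (m j : ℤ)
    set Nk := ∑ j ∈ Icc 1 k, (n j : ℤ)
    set P := ∏ j ∈ Icc (k + 2) I, R j
    set A := qint q (1 + v (k + 1))
    set B := qint q (1 + v (k + 2))
    have hA : A ≠ 0 := hqv (k + 1)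
    have hB : B ≠ 0 := hqv (k + 2)
    have hdec : qint q (1 + (m (k + 1) : ℤ) + v (k + 1))
        = q ^ (m (k + 1) : ℤ) * A + q ^ (-(1 + v (k + 1))) * qint q (m (k + 1)) := by
      rw [show (1 + (m (k + 1) : ℤ) + v (k + 1)) = (1 + v (k + 1)) + m (k + 1) by ring,
        qint_add hq]
    have key : q ^ (-Nk - 1) * qint q ((m (k + 1) : ℤ)) / (A * B)
        = q ^ Mk / A * (qint q (1 + (m (k + 1) : ℤ) + v (k + 1)) / B)
          - q ^ (Mk + (m (k + 1) : ℤ)) / B := by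
      rw [hdec]
      have e1 : q ^ (Mk + (m (k + 1) : ℤ)) = q ^ Mk * q ^ (m (k + 1) : ℤ) := zpow_add₀ hq _ _
      have e2 : q ^ Mk * q ^ (-(1 + v (k + 1))) = q ^ (-Nk - 1) := by
        rw [← zpow_add₀ hq]
        congr 1
        rw [hvk]; ring
      rw [e1, ← e2]
      field_simp
      ring
    rw [show (∏ j ∈ Icc (k + 1) I, qint q (1 + (m j : ℤ) + v j) / qint q (1 + v (j + 1)))
        = qint q (1 + (m (k + 1) : ℤ) + v (k + 1)) / B * P from hsplit]
    calc q ^ (-Nk - 1) * qint q ((m (k + 1) : ℕ) : ℤ) / (A * B) * P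
        = (q ^ (-Nk - 1) * qint q ((m (k + 1) : ℤ)) / (A * B)) * P := by ring
      _ = (q ^ Mk / A * (qint q (1 + (m (k + 1) : ℤ) + v (k + 1)) / B)
            - q ^ (Mk + (m (k + 1) : ℤ)) / B) * P := by rw [key]
      _ = q ^ Mk / A * ((qint q (1 + (m (k + 1) : ℤ) + v (k + 1)) / B) * P)
            - q ^ (Mk + (m (k + 1) : ℤ)) / B * P := by ring
  rw [Finset.sum_congr rfl hterm, tele]
  congr 1
  · simp only [hF]
    rw [show v 1 = 0 by rw [hv]; simp]
    norm_num [qint_one hq hq2]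
  · simp only [hF, Nat.add_sub_cancel]
    simp
end

section
/- Let n_1,…,n_I and m_1,…,m_I be positive integers and v_i := \sum_{j=1}^{i}(n_j + m_j) with v_0 = 0. Then \sum_{i=1}^{I} q^{-\sum_{j=1}^{i} n_j}·[m_i]/[v_i] · \prod_{l=1}^{i-1} [n_l + v_{l-1}]/[v_l] = 1 - q^{\sum_{i=1}^{I} m_i} · \prod_{l=1}^{I} [n_l + v_{l-1}]/[v_l], where [n] is the quantum integer (q^n - q^{-n})/(q - q^{-1}). -/
open Finset

lemma key_app15 {K : Type*} [Field K] (q : K) (hq : q ≠ 0)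
    (N M nn mm : ℤ) :
    q ^ (M + mm) * qint q (nn + (N+M))
      = q ^ M * qint q (N+M+nn+mm) - q ^ (-(N+nn)) * qint q mm := by
  unfold qint
  rw [← mul_div_assoc, ← mul_div_assoc, ← mul_div_assoc, ← sub_div]
  congr 1
  simp only [mul_sub, ← zpow_add₀ hq]
  rw [show M + mm + (nn + (N+M)) = M + (N+M+nn+mm) from by ring,
      show M + mm + -(nn + (N+M)) = -(N+nn) + mm from by ring,
      show -(N+nn) + -mm = M + -(N+M+nn+mm) from by ring]
  ring

/-- Lemma (lemma-app-15): with `v_i = ∑_{j≤i}(n_j+m_j)`, `v_0 = 0`,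
`∑_{i=1}^I q^{-∑_{j≤i}n_j}[m_i]/[v_i] ∏_{l<i}[n_l+v_{l-1}]/[v_l]
  = 1 - q^{∑ m_i} ∏_{l=1}^I [n_l+v_{l-1}]/[v_l]`. -/
theorem sum_rule_app15 {K : Type*} [Field K] (q : K)
    (hq : q ≠ 0) (hq2 : q ^ 2 ≠ 1)
    (hpos : ∀ n : ℤ, 1 ≤ n → qint q n ≠ 0)
    (I : ℕ) (m n : ℕ → ℕ)
    (hm : ∀ i ∈ Icc 1 I, 1 ≤ m i) (hn : ∀ i ∈ Icc 1 I, 1 ≤ n i)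
    (v : ℕ → ℤ) (hv : ∀ i, v i = ∑ j ∈ Icc 1 i, ((n j : ℤ) + (m j : ℤ))) :
    ∑ i ∈ Icc 1 I,
      q ^ (-∑ j ∈ Icc 1 i, (n j : ℤ)) * qint q (m i) / qint q (v i) *
        ∏ l ∈ Icc 1 (i - 1), qint q ((n l : ℤ) + v (l - 1)) / qint q (v l)
      = 1 - q ^ (∑ i ∈ Icc 1 I, (m i : ℤ)) *
          ∏ l ∈ Icc 1 I, qint q ((n l : ℤ) + v (l - 1)) / qint q (v l) := by
  revert hm hn
  induction I with
  | zero => intro _ _; simp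
  | succ I ih =>
    intro hm hn
    have hm' : ∀ i ∈ Icc 1 I, 1 ≤ m i := fun i hi => hm i (by simp at hi ⊢; omega)
    have hn' : ∀ i ∈ Icc 1 I, 1 ≤ n i := fun i hi => hn i (by simp at hi ⊢; omega)
    set N : ℤ := ∑ j ∈ Icc 1 I, (n j : ℤ) with hN
    set M : ℤ := ∑ j ∈ Icc 1 I, (m j : ℤ) with hM
    have hN0 : 0 ≤ N := Finset.sum_nonneg fun i _ => Int.natCast_nonneg _
    have hM0 : 0 ≤ M := Finset.sum_nonneg fun i _ => Int.natCast_nonneg _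
    have hnn : (1 : ℤ) ≤ (n (I+1) : ℤ) := by
      have := hn (I+1) (by simp); exact_mod_cast this
    have hmm : (1 : ℤ) ≤ (m (I+1) : ℤ) := by
      have := hm (I+1) (by simp); exact_mod_cast this
    have hvI : v I = N + M := by
      rw [hv, Finset.sum_add_distrib]
    have hv1 : v (I+1) = N + M + (n (I+1) : ℤ) + (m (I+1) : ℤ) := by
      rw [hv, Finset.sum_Icc_succ_top (by omega), Finset.sum_add_distrib]; ring
    have hden : qint q (v (I+1)) ≠ 0 := by
      apply hpos; rw [hv1]; omega
    rw [Finset.sum_Icc_succ_top (by omega), Finset.prod_Icc_succ_top (by omega),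
        Finset.sum_Icc_succ_top (by omega : 1 ≤ I + 1)
          (f := fun i => (m i : ℤ)),
        Finset.sum_Icc_succ_top (by omega : 1 ≤ I + 1)
          (f := fun j => (n j : ℤ)),
        ih hm' hn']
    simp only [Nat.add_sub_cancel]
    set P : K := ∏ l ∈ Icc 1 I, qint q ((n l : ℤ) + v (l - 1)) / qint q (v l) with hP
    rw [hvI, hv1]
    set nn : ℤ := (n (I+1) : ℤ)
    set mm : ℤ := (m (I+1) : ℤ)
    rw [hv1] at hden
    have h2 : q ^ (M + mm) * (qint q (nn + (N + M)) / qint q (N+M+nn+mm))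
        = q ^ M - q ^ (-(N + nn)) * qint q mm / qint q (N+M+nn+mm) := by
      rw [← mul_div_assoc, key_app15 q hq, sub_div, mul_div_assoc (q ^ M),
          div_self hden, mul_one, mul_div_assoc]
    rw [show q ^ (M + mm) * (P * (qint q (nn + (N+M)) / qint q (N+M+nn+mm)))
        = (q ^ (M + mm) * (qint q (nn + (N+M)) / qint q (N+M+nn+mm))) * P from by ring,
        h2]
    ring
end

section
/- Let n_1,…,n_I and m_1,…,m_I be positive integers and v_i := \sum_{j=1}^{i}(n_j + m_j) with v_0 = 0. Then \sum_{i=1}^{I} q^{-\sum_{k=1}^{i} n_k}·[m_i]/[1 + n_i + v_{i-1}] · \prod_{j=1}^{i-1} [n_j + v_{j-1}]/[v_j] · \prod_{j=i+1}^{I} [1 + v_j]/[1 + n_j + v_{j-1}] · { (1 + q^{-2})·q^{\sum_{k=1}^{i-1} m_k} - q^{-1 - \sum_{k=1}^{i} n_k}·[m_i - 1]/[v_i] } = q^{-1}·\prod_{j=1}^{I} [1 + v_j]/[1 + n_j + v_{j-1}] - q^{2\sum_{k=1}^{I} m_k - 1}·\prod_{i=1}^{I} [n_i + v_{i-1}]/[v_i],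 where [n] is the quantum integer. -/
open Finset

lemma key {K : Type*} [Field K] (q : K) (hq : q ≠ 0) (s c : ℤ)
    (hA : qint q (1 + s) ≠ 0) (hB : qint q (s + c) ≠ 0) :
    q ^ (-s) * qint q c / qint q (1 + s) *
      ((1 + q ^ (-2 : ℤ)) - q ^ (-s - 1) * qint q (c - 1) / qint q (s + c))
    = q⁻¹ * qint q (1 + s + c) / qint q (1 + s) -
      q ^ (2 * c - 1) * qint q s / qint q (s + c) := by
  have hX : q ^ s ≠ 0 := zpow_ne_zero _ hq
  have hY : q ^ c ≠ 0 := zpow_ne_zero _ hq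
  have hqr : q * q⁻¹ = 1 := mul_inv_cancel₀ hq
  have hA' : qint q (1 + s) * (qint q (1 + s))⁻¹ = 1 := mul_inv_cancel₀ hA
  have hB' : qint q (s + c) * (qint q (s + c))⁻¹ = 1 := mul_inv_cancel₀ hB
  have E : (q ^ s)⁻¹ * qint q c * ((1 + q⁻¹ * q⁻¹) * qint q (s + c) -
        (q ^ s)⁻¹ * q⁻¹ * qint q (c - 1))
      = q⁻¹ * qint q (1 + s + c) * qint q (s + c) -
        q ^ c * q ^ c * q⁻¹ * qint q s * qint q (1 + s) := by
    simp only [qint, show (c - 1 : ℤ) = c + (-1) by ring,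
      zpow_add₀ hq, zpow_neg, zpow_one, mul_inv, inv_inv]
    linear_combination ((q - q⁻¹)⁻¹) ^ 2 *
      (-((q ^ s)⁻¹ ^ 2 * (q ^ c)⁻¹ ^ 2) + (q ^ s)⁻¹ ^ 2 * q ^ c * (q ^ c)⁻¹ +
        q ^ s * (q ^ s)⁻¹ * q ^ c * (q ^ c)⁻¹ - q ^ s * (q ^ s)⁻¹ * (q ^ c) ^ 2) * hqr
  rw [show (-s - 1 : ℤ) = -s + (-1) by ring,
      show (2 * c - 1 : ℤ) = c + c + (-1) by ring,
      show (-2 : ℤ) = -1 + (-1 : ℤ) by norm_num]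
  simp only [zpow_add₀ hq, zpow_neg, zpow_one]
  linear_combination (qint q (1 + s))⁻¹ * (qint q (s + c))⁻¹ * E +
    (q⁻¹ * qint q (1 + s + c) - (q ^ s)⁻¹ * qint q c * (1 + q⁻¹ * q⁻¹)) *
      (qint q (1 + s))⁻¹ * hB' -
    q ^ c * q ^ c * q⁻¹ * qint q s * (qint q (s + c))⁻¹ * hA'

/-- Lemma (lemma-app-17): with `v_i = ∑_{j≤i}(n_j+m_j)`, `v_0 = 0`,
`∑_{i=1}^I q^{-∑_{k≤i}n_k}·[m_i]/[1+n_i+v_{i-1}]·∏_{j<i}[n_j+v_{j-1}]/[v_j]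
   ·∏_{j=i+1}^I [1+v_j]/[1+n_j+v_{j-1}]
   ·{(1+q^{-2})q^{∑_{k<i}m_k} - q^{-1-∑_{k≤i}n_k}[m_i-1]/[v_i]}
 = q^{-1}∏_{j=1}^I [1+v_j]/[1+n_j+v_{j-1}]
   - q^{2∑ m_k - 1}∏_{i=1}^I [n_i+v_{i-1}]/[v_i]`. -/
theorem sum_rule_app17 {K : Type*} [Field K] (q : K)
    (hq : q ≠ 0) (hq2 : q ^ 2 ≠ 1)
    (hpos : ∀ n : ℤ, 1 ≤ n → qint q n ≠ 0)
    (I : ℕ) (m n : ℕ → ℕ)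
    (hm : ∀ i ∈ Icc 1 I, 1 ≤ m i) (hn : ∀ i ∈ Icc 1 I, 1 ≤ n i)
    (v : ℕ → ℤ) (hv : ∀ i, v i = ∑ j ∈ Icc 1 i, ((n j : ℤ) + (m j : ℤ))) :
    ∑ i ∈ Icc 1 I,
      q ^ (-∑ k ∈ Icc 1 i, (n k : ℤ)) * qint q (m i) /
          qint q (1 + (n i : ℤ) + v (i - 1)) *
        (∏ j ∈ Icc 1 (i - 1), qint q ((n j : ℤ) + v (j - 1)) / qint q (v j)) *
        (∏ j ∈ Icc (i + 1) I, qint q (1 + v j) / qint q (1 + (n j : ℤ) + v (j - 1))) *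
        ((1 + q ^ (-2 : ℤ)) * q ^ (∑ k ∈ Icc 1 (i - 1), (m k : ℤ)) -
          q ^ (-1 - ∑ k ∈ Icc 1 i, (n k : ℤ)) * qint q ((m i : ℤ) - 1) / qint q (v i))
      = q⁻¹ * (∏ j ∈ Icc 1 I, qint q (1 + v j) / qint q (1 + (n j : ℤ) + v (j - 1))) -
          q ^ (2 * (∑ k ∈ Icc 1 I, (m k : ℤ)) - 1) *
            ∏ i ∈ Icc 1 I, qint q ((n i : ℤ) + v (i - 1)) / qint q (v i) := by
  revert hm hn
  induction I with
  | zero =>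
    intro hm hn
    rw [show Icc 1 0 = (∅ : Finset ℕ) from Finset.Icc_eq_empty (by omega)]
    simp
  | succ I ih =>
    intro hm hn
    have hm' : ∀ i ∈ Icc 1 I, 1 ≤ m i := fun i hi => hm i (by simp at hi ⊢; omega)
    have hn' : ∀ i ∈ Icc 1 I, 1 ≤ n i := fun i hi => hn i (by simp at hi ⊢; omega)
    have h1I : (1 : ℕ) ≤ I + 1 := by omega
    have hvnn : 0 ≤ v I := by
      rw [hv]; positivity
    have hm1 : (1 : ℤ) ≤ (m (I + 1) : ℤ) := by
      exact_mod_cast hm (I + 1) (by simp)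
    have hn1 : (1 : ℤ) ≤ (n (I + 1) : ℤ) := by
      exact_mod_cast hn (I + 1) (by simp)
    have hA : qint q (1 + ((n (I + 1) : ℤ) + v I)) ≠ 0 := hpos _ (by linarith)
    have hB : qint q ((n (I + 1) : ℤ) + v I + (m (I + 1) : ℤ)) ≠ 0 := hpos _ (by linarith)
    have K := key q hq ((n (I + 1) : ℤ) + v I) (m (I + 1) : ℤ) hA hB
    -- rewrite qint arguments in K to match goal forms
    have hv1 : (n (I + 1) : ℤ) + v I + (m (I + 1) : ℤ) = v (I + 1) := by
      rw [hv I, hv (I + 1), Finset.sum_Icc_succ_top h1I]; ring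
    rw [show (1 + ((n (I + 1) : ℤ) + v I) + (m (I + 1) : ℤ)) = 1 + v (I + 1) by
          rw [← hv1]; ring,
        hv1,
        show (1 + ((n (I + 1) : ℤ) + v I)) = 1 + (n (I + 1) : ℤ) + v I by ring] at K
    -- decompose the sum at the top index
    rw [Finset.sum_Icc_succ_top h1I]
    simp only [Nat.add_sub_cancel]
    rw [show Icc (I + 1 + 1) (I + 1) = (∅ : Finset ℕ) from Finset.Icc_eq_empty (by omega),
        Finset.prod_empty]
    -- rewrite the inner Q-products for i ≤ I and apply the induction hypothesis
    have hsum : (∑ i ∈ Icc 1 I,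
        q ^ (-∑ k ∈ Icc 1 i, (n k : ℤ)) * qint q (m i) /
            qint q (1 + (n i : ℤ) + v (i - 1)) *
          (∏ j ∈ Icc 1 (i - 1), qint q ((n j : ℤ) + v (j - 1)) / qint q (v j)) *
          (∏ j ∈ Icc (i + 1) (I + 1), qint q (1 + v j) / qint q (1 + (n j : ℤ) + v (j - 1))) *
          ((1 + q ^ (-2 : ℤ)) * q ^ (∑ k ∈ Icc 1 (i - 1), (m k : ℤ)) -
            q ^ (-1 - ∑ k ∈ Icc 1 i, (n k : ℤ)) * qint q ((m i : ℤ) - 1) / qint q (v i)))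
        = (∑ i ∈ Icc 1 I,
        q ^ (-∑ k ∈ Icc 1 i, (n k : ℤ)) * qint q (m i) /
            qint q (1 + (n i : ℤ) + v (i - 1)) *
          (∏ j ∈ Icc 1 (i - 1), qint q ((n j : ℤ) + v (j - 1)) / qint q (v j)) *
          (∏ j ∈ Icc (i + 1) I, qint q (1 + v j) / qint q (1 + (n j : ℤ) + v (j - 1))) *
          ((1 + q ^ (-2 : ℤ)) * q ^ (∑ k ∈ Icc 1 (i - 1), (m k : ℤ)) -
            q ^ (-1 - ∑ k ∈ Icc 1 i, (n k : ℤ)) * qint q ((m i : ℤ) - 1) / qint q (v i))) *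
          (qint q (1 + v (I + 1)) / qint q (1 + (n (I + 1) : ℤ) + v I)) := by
      rw [Finset.sum_mul]
      refine Finset.sum_congr rfl fun i hi => ?_
      have hiI : i ≤ I := (Finset.mem_Icc.mp hi).2
      rw [Finset.prod_Icc_succ_top (by omega : i + 1 ≤ I + 1)]
      simp only [Nat.add_sub_cancel]
      ring
    rw [hsum, ih hm' hn']
    simp only [Finset.prod_Icc_succ_top h1I, Finset.sum_Icc_succ_top h1I]
    simp only [Nat.add_sub_cancel]
    -- bookkeeping for exponents
    have hNM : v I = (∑ k ∈ Icc 1 I, (n k : ℤ)) + (∑ k ∈ Icc 1 I, (m k : ℤ)) := by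
      rw [hv I, ← Finset.sum_add_distrib]
    rw [show (-((∑ k ∈ Icc 1 I, (n k : ℤ)) + (n (I + 1) : ℤ)))
          = -((n (I + 1) : ℤ) + v I) + (∑ k ∈ Icc 1 I, (m k : ℤ)) by linarith,
        show (-1 - ((∑ k ∈ Icc 1 I, (n k : ℤ)) + (n (I + 1) : ℤ)))
          = (-((n (I + 1) : ℤ) + v I) - 1) + (∑ k ∈ Icc 1 I, (m k : ℤ)) by linarith,
        show (2 * ((∑ k ∈ Icc 1 I, (m k : ℤ)) + (m (I + 1) : ℤ)) - 1)
          = (2 * (m (I + 1) : ℤ) - 1) + ((∑ k ∈ Icc 1 I, (m k : ℤ)) + (∑ k ∈ Icc 1 I, (m k : ℤ))) by ring,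
        show (2 * (∑ k ∈ Icc 1 I, (m k : ℤ)) - 1)
          = (-1 : ℤ) + ((∑ k ∈ Icc 1 I, (m k : ℤ)) + (∑ k ∈ Icc 1 I, (m k : ℤ))) by ring]
    simp only [zpow_add₀ hq, zpow_neg, zpow_one] at K ⊢
    linear_combination (q ^ (∑ k ∈ Icc 1 I, (m k : ℤ)) * q ^ (∑ k ∈ Icc 1 I, (m k : ℤ)) *
      ∏ j ∈ Icc 1 I, qint q ((n j : ℤ) + v (j - 1)) / qint q (v j)) * K
end
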